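/- Let H and H̃ be d×d symmetric positive definite real matrices with (1−ε)H ⪯ H̃ ⪯ (1+ε)H for some ε ∈ (0, 1), let g ∈ ℝ^d, let p* = H⁻¹g and p̃ = H̃⁻¹g, and let ε₀ ∈ (0, 1). Suppose p̃′ ∈ ℝ^d satisfies ‖H̃^{1/2}(p̃′ − p̃)‖₂ ≤ ε₀·‖H̃^{1/2}p̃‖₂, and let H^{1/2}, H̃^{1/2} be the positive semidefinite square roots of H, H̃. Then ‖H^{1/2}(p̃′ − p*)‖₂ ≤ ((ε₀ + ε)/(1−ε))·‖H^{1/2}p*‖₂. -/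

import Mathlib

open Matrix

noncomputable section

/-- The Euclidean (ℓ2) norm of a vector in `ℝ^d`. -/
def norm2 {d : ℕ} (x : Fin d → ℝ) : ℝ := Real.sqrt (x ⬝ᵥ x)

/-- The positive semidefinite square root of a positive semidefinite matrix (removed from
Mathlib; restored here with its former definition). -/
def Matrix.PosSemidef.sqrt {n 𝕜 : Type*} [Fintype n] [RCLike 𝕜] [PartialOrder 𝕜] [StarOrderedRing 𝕜]
    [DecidableEq n]
    {A : Matrix n n 𝕜} (hA : A.PosSemidef) : Matrix n n 𝕜 :=
  hA.1.eigenvectorUnitary.1 * diagonal ((↑) ∘ Real.sqrt ∘ hA.1.eigenvalues) *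
  (star hA.1.eigenvectorUnitary : Matrix n n 𝕜)

section AuxInexactNewton
variable {d : ℕ}

lemma sqrt_isHermitian' {M : Matrix (Fin d) (Fin d) ℝ} (hM : M.PosSemidef) :
    hM.sqrt.IsHermitian := by
  unfold Matrix.PosSemidef.sqrt
  rw [IsHermitian, conjTranspose_mul, conjTranspose_mul, diagonal_conjTranspose,
    star_eq_conjTranspose, conjTranspose_conjTranspose, Matrix.mul_assoc]
  rfl
lemma sqrt_mul_self' {M : Matrix (Fin d) (Fin d) ℝ} (hM : M.PosSemidef) :
    hM.sqrt * hM.sqrt = M := by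
  unfold Matrix.PosSemidef.sqrt
  have hU : (star hM.1.eigenvectorUnitary : Matrix (Fin d) (Fin d) ℝ) * hM.1.eigenvectorUnitary.1 = 1 :=
    Unitary.coe_star_mul_self _
  have hD : diagonal ((↑) ∘ Real.sqrt ∘ hM.1.eigenvalues) * diagonal ((↑) ∘ Real.sqrt ∘ hM.1.eigenvalues)
      = diagonal (RCLike.ofReal ∘ hM.1.eigenvalues : Fin d → ℝ) := by
    rw [diagonal_mul_diagonal]
    congr 1; funext i
    simp [Real.mul_self_sqrt (hM.eigenvalues_nonneg i)]
  calc _ = hM.1.eigenvectorUnitary.1 * (diagonal ((↑) ∘ Real.sqrt ∘ hM.1.eigenvalues) *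
      ((star hM.1.eigenvectorUnitary : Matrix (Fin d) (Fin d) ℝ) * hM.1.eigenvectorUnitary.1) *
      diagonal ((↑) ∘ Real.sqrt ∘ hM.1.eigenvalues)) *
      (star hM.1.eigenvectorUnitary : Matrix (Fin d) (Fin d) ℝ) := by simp only [Matrix.mul_assoc]; rfl
    _ = M := by
      rw [hU, Matrix.mul_one, hD]
      conv_rhs => rw [hM.1.spectral_theorem]
      simp

lemma q_nonneg {M : Matrix (Fin d) (Fin d) ℝ} (hM : M.PosSemidef) (x : Fin d → ℝ) :
    0 ≤ x ⬝ᵥ M *ᵥ x := by simpa using hM.dotProduct_mulVec_nonneg x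

lemma dot_symm {M : Matrix (Fin d) (Fin d) ℝ} (hM : M.IsHermitian) (x y : Fin d → ℝ) :
    x ⬝ᵥ M *ᵥ y = y ⬝ᵥ M *ᵥ x := by
  rw [dotProduct_mulVec, ← mulVec_transpose,
    ← conjTranspose_eq_transpose_of_trivial, hM.eq, dotProduct_comm]

lemma cs {M : Matrix (Fin d) (Fin d) ℝ} (hM : M.PosSemidef) (x y : Fin d → ℝ) :
    (x ⬝ᵥ M *ᵥ y)^2 ≤ (x ⬝ᵥ M *ᵥ x) * (y ⬝ᵥ M *ᵥ y) := by
  have hsym := dot_symm hM.1 y x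
  have h : ∀ t : ℝ, 0 ≤ (y ⬝ᵥ M *ᵥ y) * (t * t) + (2 * (x ⬝ᵥ M *ᵥ y)) * t + (x ⬝ᵥ M *ᵥ x) := by
    intro t
    have h0 := q_nonneg hM (x + t • y)
    simp only [add_dotProduct, dotProduct_add, mulVec_add, mulVec_smul, smul_dotProduct,
      dotProduct_smul, smul_eq_mul] at h0
    rw [hsym] at h0
    nlinarith [h0]
  have hd := discrim_le_zero h
  simp only [discrim] at hd
  nlinarith [hd]

lemma cs' {M : Matrix (Fin d) (Fin d) ℝ} (hM : M.PosSemidef) (x y : Fin d → ℝ) :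
    x ⬝ᵥ M *ᵥ y ≤ Real.sqrt (x ⬝ᵥ M *ᵥ x) * Real.sqrt (y ⬝ᵥ M *ᵥ y) := by
  have h := cs hM x y
  have h1 := q_nonneg hM x
  calc x ⬝ᵥ M *ᵥ y ≤ |x ⬝ᵥ M *ᵥ y| := le_abs_self _
    _ = Real.sqrt ((x ⬝ᵥ M *ᵥ y)^2) := (Real.sqrt_sq_eq_abs _).symm
    _ ≤ Real.sqrt ((x ⬝ᵥ M *ᵥ x) * (y ⬝ᵥ M *ᵥ y)) := Real.sqrt_le_sqrt h
    _ = _ := Real.sqrt_mul h1 _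

lemma norm2_sqrt {M : Matrix (Fin d) (Fin d) ℝ} (hM : M.PosSemidef) (x : Fin d → ℝ) :
    Real.sqrt ((hM.sqrt *ᵥ x) ⬝ᵥ (hM.sqrt *ᵥ x)) = Real.sqrt (x ⬝ᵥ M *ᵥ x) := by
  congr 1
  rw [← dot_symm (sqrt_isHermitian' hM) x (hM.sqrt *ᵥ x), mulVec_mulVec, sqrt_mul_self' hM]

/-- pure scalar lemma for step D -/
lemma stepD_scalar {ε b c m : ℝ} (h1ε : (0:ℝ) < 1 - ε) (hε1 : 0 < ε)
    (hb : 0 < b) (hc : 0 < c)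
    (hkey : ∀ s : ℝ, 0 < s → m ≤ ε/2 * (s * b + s⁻¹ * c))
    (hG : (1-ε) * b ≤ m) : Real.sqrt b ≤ (ε/(1-ε)) * Real.sqrt c := by
  have hsb : (0:ℝ) < Real.sqrt b := Real.sqrt_pos.mpr hb
  have hsc : (0:ℝ) < Real.sqrt c := Real.sqrt_pos.mpr hc
  have hbs : Real.sqrt b * Real.sqrt b = b := Real.mul_self_sqrt hb.le
  have hcs : Real.sqrt c * Real.sqrt c = c := Real.mul_self_sqrt hc.le
  have hs : (0:ℝ) < Real.sqrt c / Real.sqrt b := by positivity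
  have key := hkey _ hs
  have e1 : (Real.sqrt c / Real.sqrt b) * b = Real.sqrt b * Real.sqrt c := by
    field_simp; nlinarith
  have e2 : (Real.sqrt c / Real.sqrt b)⁻¹ * c = Real.sqrt b * Real.sqrt c := by
    rw [inv_div]; field_simp; nlinarith
  rw [e1, e2] at key
  have hfin : (1-ε) * (Real.sqrt b * Real.sqrt b) ≤ ε * (Real.sqrt b * Real.sqrt c) := by
    rw [hbs]; linarith
  rw [div_mul_eq_mul_div, le_div_iff₀ h1ε]
  nlinarith

/-- pure scalar lemma: a ≤ k² c with nonnegs gives √a ≤ k √c -/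
lemma sqrt_le_of_sq {a c k : ℝ} (ha : 0 ≤ a) (hc : 0 ≤ c) (hk : 0 ≤ k)
    (h : a ≤ k^2 * c) : Real.sqrt a ≤ k * Real.sqrt c := by
  calc Real.sqrt a ≤ Real.sqrt (k^2 * c) := Real.sqrt_le_sqrt h
    _ = k * Real.sqrt c := by rw [Real.sqrt_mul (by positivity), Real.sqrt_sq hk]

end AuxInexactNewton

/-- an inexact solution `p̃′` of `H̃p = g` meeting the relative stopping
condition `‖H̃^{1/2}(p̃′ − p̃)‖₂ ≤ ε₀‖H̃^{1/2}p̃‖₂` is close to the exact Newton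
direction `p* = H⁻¹g` in the `H`-weighted norm. -/
theorem inexact_newton_direction_weighted_bound {d : ℕ}
    (H Htil : Matrix (Fin d) (Fin d) ℝ) (hH : H.PosDef) (hHtil : Htil.PosDef)
    (ε : ℝ) (hε : 0 < ε ∧ ε < 1)
    (happrox : (Htil - (1 - ε) • H).PosSemidef ∧ ((1 + ε) • H - Htil).PosSemidef)
    (g : Fin d → ℝ)
    (ε₀ : ℝ) (hε₀ : 0 < ε₀ ∧ ε₀ < 1)
    (ptil' : Fin d → ℝ)
    (hstop : norm2 (hHtil.posSemidef.sqrt *ᵥ (ptil' - Htil⁻¹ *ᵥ g)) ≤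
      ε₀ * norm2 (hHtil.posSemidef.sqrt *ᵥ (Htil⁻¹ *ᵥ g))) :
    norm2 (hH.posSemidef.sqrt *ᵥ (ptil' - H⁻¹ *ᵥ g)) ≤
      ((ε₀ + ε) / (1 - ε)) * norm2 (hH.posSemidef.sqrt *ᵥ (H⁻¹ *ᵥ g)) := by
  obtain ⟨hε1, hε2⟩ := hε
  obtain ⟨hε01, hε02⟩ := hε₀
  obtain ⟨hlow, hup⟩ := happrox
  have h1ε : (0:ℝ) < 1 - ε := by linarith
  obtain ⟨pstar, hpstar⟩ : ∃ p, p = H⁻¹ *ᵥ g := ⟨_, rfl⟩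
  obtain ⟨ptil, hptil⟩ : ∃ p, p = Htil⁻¹ *ᵥ g := ⟨_, rfl⟩
  obtain ⟨e, he⟩ : ∃ p, p = ptil' - ptil := ⟨_, rfl⟩
  obtain ⟨v, hv⟩ : ∃ p, p = ptil - pstar := ⟨_, rfl⟩
  simp only [norm2] at hstop ⊢
  rw [norm2_sqrt hHtil.posSemidef, norm2_sqrt hHtil.posSemidef] at hstop
  rw [norm2_sqrt hH.posSemidef, norm2_sqrt hH.posSemidef]
  rw [← hptil, ← he] at hstop
  rw [← hpstar]
  rw [show ptil' - pstar = e + v from by rw [he, hv]; abel]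
  have hHg : H *ᵥ pstar = g := by
    rw [hpstar, mulVec_mulVec, Matrix.mul_nonsing_inv _ (isUnit_iff_ne_zero.mpr hH.det_pos.ne'),
      one_mulVec]
  have hHtg : Htil *ᵥ ptil = g := by
    rw [hptil, mulVec_mulVec,
      Matrix.mul_nonsing_inv _ (isUnit_iff_ne_zero.mpr hHtil.det_pos.ne'), one_mulVec]
  have G1 : ∀ x : Fin d → ℝ, (1-ε) * (x ⬝ᵥ H *ᵥ x) ≤ x ⬝ᵥ Htil *ᵥ x := by
    intro x
    have h0 := q_nonneg hlow x
    simp only [sub_mulVec, dotProduct_sub, smul_mulVec, dotProduct_smul,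
      smul_eq_mul] at h0
    linarith
  have G2 : ∀ x : Fin d → ℝ, x ⬝ᵥ Htil *ᵥ x ≤ (1+ε) * (x ⬝ᵥ H *ᵥ x) := by
    intro x
    have h0 := q_nonneg hup x
    simp only [sub_mulVec, dotProduct_sub, smul_mulVec, dotProduct_smul,
      smul_eq_mul] at h0
    linarith
  -- opaque scalars
  obtain ⟨a, ha⟩ : ∃ r, r = e ⬝ᵥ H *ᵥ e := ⟨_, rfl⟩
  obtain ⟨b, hb⟩ : ∃ r, r = v ⬝ᵥ H *ᵥ v := ⟨_, rfl⟩
  obtain ⟨c, hc⟩ : ∃ r, r = pstar ⬝ᵥ H *ᵥ pstar := ⟨_, rfl⟩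
  obtain ⟨qtp, hqtp⟩ : ∃ r, r = ptil ⬝ᵥ Htil *ᵥ ptil := ⟨_, rfl⟩
  obtain ⟨qte, hqte⟩ : ∃ r, r = e ⬝ᵥ Htil *ᵥ e := ⟨_, rfl⟩
  rw [← hqte, ← hqtp] at hstop
  have ha0 : 0 ≤ a := ha ▸ q_nonneg hH.posSemidef e
  have hb0 : 0 ≤ b := hb ▸ q_nonneg hH.posSemidef v
  have hc0 : 0 ≤ c := hc ▸ q_nonneg hH.posSemidef pstar
  have hqtp0 : 0 ≤ qtp := hqtp ▸ q_nonneg hHtil.posSemidef ptil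
  have hqte0 : 0 ≤ qte := hqte ▸ q_nonneg hHtil.posSemidef e
  -- Step A : (1-ε) * qtp ≤ c
  have stepA : (1-ε) * qtp ≤ c := by
    have e1 : qtp = ptil ⬝ᵥ H *ᵥ pstar := by rw [hqtp, hHtg, ← hHg]
    have e2 := cs hH.posSemidef ptil pstar
    have e3 := G1 ptil
    rw [← hc, ← e1] at e2
    rw [← hqtp] at e3
    rcases eq_or_lt_of_le hqtp0 with h|h
    · nlinarith
    · nlinarith [mul_le_mul_of_nonneg_left e2 h1ε.le, mul_le_mul_of_nonneg_right e3 hc0]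
  -- Step B : qte ≤ ε₀^2 * qtp
  have stepB : qte ≤ ε₀^2 * qtp := by
    have h2 := Real.sq_sqrt hqte0
    have h3 := Real.sq_sqrt hqtp0
    have h4 := Real.sqrt_nonneg qte
    have h5 := Real.sqrt_nonneg qtp
    nlinarith [hstop]
  -- Step C : sqrt a ≤ (ε₀/(1-ε)) * sqrt c
  have stepC : Real.sqrt a ≤ (ε₀/(1-ε)) * Real.sqrt c := by
    have h1 := G1 e
    rw [← ha, ← hqte] at h1
    apply sqrt_le_of_sq ha0 hc0 (by positivity)
    rw [div_pow, div_mul_eq_mul_div, le_div_iff₀ (by positivity)]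
    nlinarith [mul_le_mul_of_nonneg_left stepA (sq_nonneg ε₀),
      mul_le_mul_of_nonneg_left stepB h1ε.le, mul_le_mul_of_nonneg_left h1 h1ε.le]
  -- polarization
  have pol : ∀ x y : Fin d → ℝ,
      x ⬝ᵥ H *ᵥ y - x ⬝ᵥ Htil *ᵥ y ≤ ε/2 * (x ⬝ᵥ H *ᵥ x + y ⬝ᵥ H *ᵥ y) := by
    intro x y
    have hsH := dot_symm hH.posSemidef.1 x y
    have hsT := dot_symm hHtil.posSemidef.1 x y
    have h1 := G1 (x + y)
    have h2 := G2 (x - y)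
    simp only [add_dotProduct, dotProduct_add, mulVec_add, sub_dotProduct, dotProduct_sub,
      mulVec_sub] at h1 h2
    linarith
  -- Step D : sqrt b ≤ (ε/(1-ε)) * sqrt c
  obtain ⟨m1, hm1⟩ : ∃ r, r = v ⬝ᵥ H *ᵥ pstar := ⟨_, rfl⟩
  obtain ⟨m2, hm2⟩ : ∃ r, r = v ⬝ᵥ Htil *ᵥ pstar := ⟨_, rfl⟩
  have hTv : v ⬝ᵥ Htil *ᵥ v = m1 - m2 := by
    rw [hv, show Htil *ᵥ (ptil - pstar) = g - Htil *ᵥ pstar from by rw [mulVec_sub, hHtg],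
      ← hHg, dotProduct_sub, hm1, hm2, ← hv]
  have hG1v : (1-ε) * b ≤ m1 - m2 := by
    have h1 := G1 v
    rw [hTv, ← hb] at h1
    exact h1
  have hkey : ∀ s : ℝ, 0 < s → m1 - m2 ≤ ε/2 * (s * b + s⁻¹ * c) := by
    intro s hs
    have hssq : Real.sqrt s * Real.sqrt s = s := Real.mul_self_sqrt hs.le
    have hsne : Real.sqrt s ≠ 0 := by positivity
    have hpolv := pol (Real.sqrt s • v) ((Real.sqrt s)⁻¹ • pstar)
    simp only [smul_dotProduct, dotProduct_smul, mulVec_smul, smul_eq_mul] at hpolv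
    rw [← hm1, ← hm2, ← hb, ← hc] at hpolv
    have hinv : (Real.sqrt s)⁻¹ * (Real.sqrt s)⁻¹ = s⁻¹ := by
      rw [← mul_inv, hssq]
    have r1 : (Real.sqrt s)⁻¹ * (Real.sqrt s * m1) = m1 := by
      rw [← mul_assoc, inv_mul_cancel₀ hsne, one_mul]
    have r2 : (Real.sqrt s)⁻¹ * (Real.sqrt s * m2) = m2 := by
      rw [← mul_assoc, inv_mul_cancel₀ hsne, one_mul]
    have r3 : Real.sqrt s * (Real.sqrt s * b) = s * b := by rw [← mul_assoc, hssq]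
    have r4 : (Real.sqrt s)⁻¹ * ((Real.sqrt s)⁻¹ * c) = s⁻¹ * c := by rw [← mul_assoc, hinv]
    rw [r1, r2, r3, r4] at hpolv
    exact hpolv
  have stepD : Real.sqrt b ≤ (ε/(1-ε)) * Real.sqrt c := by
    rcases eq_or_lt_of_le hb0 with hbz|hbz
    · rw [← hbz, Real.sqrt_zero]; positivity
    · rcases eq_or_lt_of_le hc0 with hcz|hcz
      · exfalso
        have hps : pstar = 0 := by
          by_contra hne
          have h := hH.dotProduct_mulVec_pos hne
          simp only [star_trivial] at h
          rw [← hc, ← hcz] at h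
          exact lt_irrefl _ h
        have hm20 : m2 = 0 := by rw [hm2, hps]; simp
        have hm10 : m1 = 0 := by rw [hm1, hps]; simp
        rw [hm10, hm20] at hG1v
        linarith [mul_pos h1ε hbz]
      · exact stepD_scalar h1ε hε1 hbz hcz hkey hG1v
  -- Step E : combine
  have hcross := cs' hH.posSemidef e v
  rw [← ha, ← hb] at hcross
  have hsym := dot_symm hH.posSemidef.1 e v
  have hqw : (e + v) ⬝ᵥ H *ᵥ (e + v) ≤ (Real.sqrt a + Real.sqrt b)^2 := by
    simp only [add_dotProduct, dotProduct_add, mulVec_add]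
    rw [hsym, ← ha, ← hb]
    have h2 := Real.sq_sqrt ha0
    have h3 := Real.sq_sqrt hb0
    nlinarith
  rw [← hc]
  calc Real.sqrt ((e + v) ⬝ᵥ H *ᵥ (e + v))
      ≤ Real.sqrt ((Real.sqrt a + Real.sqrt b)^2) := Real.sqrt_le_sqrt hqw
    _ = Real.sqrt a + Real.sqrt b := Real.sqrt_sq (by positivity)
    _ ≤ (ε₀/(1-ε)) * Real.sqrt c + (ε/(1-ε)) * Real.sqrt c := by linarith
    _ = ((ε₀ + ε) / (1 - ε)) * Real.sqrt c := by ring
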